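/- Let k₁, …, kₙ be positive integers with k₁ + ⋯ + kₙ = 2k. Consider the incomplete weighted profile P over candidates {A, B, C} consisting of: one agent of weight 1 with total order B > C > A; one agent of weight 2k−1 with total order B > A > C; one agent of weight 2k−1 with total order C > B > A; and, for each i, one agent of weight 2kᵢ whose partial order declares only A > B. Then B is a weak possible winner of P (i.e., B ∈ WP(P)) if and only if the multiset {k₁, …, kₙ} can be partitioned into two parts each summing to k. -/

import Mathlib

open scoped Classical

/-- An agenda: a binary tree whose leaves are labelled with candidates. -/
inductive Agenda (α : Type) : Type
  | leaf (a : α) : Agenda α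
  | node (l r : Agenda α) : Agenda α

namespace Agenda

/-- The list of leaf labels of an agenda. -/
def leaves {α : Type} : Agenda α → List α
  | leaf a => [a]
  | node l r => leaves l ++ leaves r

/-- The list of depths of the leaves of an agenda. -/
def depths {α : Type} : Agenda α → List ℕ
  | leaf _ => [0]
  | node l r => (depths l ++ depths r).map (· + 1)

end Agenda

/-- A valid agenda: leaves labelled bijectively with the candidates. -/
def IsAgenda {α : Type} [Fintype α] (t : Agenda α) : Prop :=
  t.leaves.Nodup ∧ ∀ a : α, a ∈ t.leaves

/-- A balanced agenda: max and min leaf depths differ by at most 1. -/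
def IsBalanced {α : Type} (t : Agenda α) : Prop :=
  ∀ d₁ ∈ t.depths, ∀ d₂ ∈ t.depths, d₁ ≤ d₂ + 1

/-- A tournament: complete asymmetric directed graph on the candidates. -/
def IsTournament {α : Type} (T : α → α → Prop) : Prop :=
  (∀ a, ¬ T a a) ∧ ∀ a b : α, a ≠ b → (T a b ↔ ¬ T b a)

/-- Winner of an agenda under a tournament: each internal node is won by
whichever child's winner beats the other; the root's candidate wins. -/
noncomputable def winner {α : Type} (T : α → α → Prop) : Agenda α → α
  | .leaf a => a
  | .node l r => if T (winner T l) (winner T r) then winner T l else winner T r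

/-- Strict partial order: asymmetric and transitive. -/
def IsSPO {α : Type} (r : α → α → Prop) : Prop :=
  (∀ a b, r a b → ¬ r b a) ∧ (∀ a b c, r a b → r b c → r a c)

/-- Strict total order. -/
def IsSTO {α : Type} (r : α → α → Prop) : Prop :=
  IsSPO r ∧ ∀ a b : α, a ≠ b → r a b ∨ r b a

/-- An (incomplete) weighted profile: a finite sequence of agents, each with a
positive weight and a strict partial order, the sum of weights being odd. -/
structure Profile (α : Type) where
  agents : List (ℕ × (α → α → Prop))
  pos : ∀ p ∈ agents, 0 < p.1
  spo : ∀ p ∈ agents, IsSPO p.2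
  oddSum : Odd (agents.map Prod.fst).sum

/-- Total weight of agents preferring `a` to `b`. -/
noncomputable def prefWeight {α : Type} (P : Profile α) (a b : α) : ℕ :=
  (P.agents.map (fun p => if p.2 a b then p.1 else 0)).sum

/-- The majority graph of a profile. -/
def maj {α : Type} (P : Profile α) (a b : α) : Prop :=
  prefWeight P b a < prefWeight P a b

/-- `Q` is a completion of `P`: same weights, each agent's partial order is
replaced by a strict total order extending it. -/
def IsCompletion {α : Type} (P Q : Profile α) : Prop :=
  List.Forall₂ (fun p q => p.1 = q.1 ∧ IsSTO q.2 ∧ ∀ a b, p.2 a b → q.2 a b)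
    P.agents Q.agents

/-- `T` extends the (incomplete majority) graph `G`. -/
def Extends {α : Type} (G T : α → α → Prop) : Prop := ∀ a b, G a b → T a b

/-- `A` wins some agenda under `T`. -/
def WinsSome {α : Type} [Fintype α] (T : α → α → Prop) (A : α) : Prop :=
  ∃ t : Agenda α, IsAgenda t ∧ winner T t = A

/-- `A` wins every agenda under `T`. -/
def WinsAll {α : Type} [Fintype α] (T : α → α → Prop) (A : α) : Prop :=
  ∀ t : Agenda α, IsAgenda t → winner T t = A

/-- `A` wins some balanced agenda under `T`. -/
def FWinsSome {α : Type} [Fintype α] (T : α → α → Prop) (A : α) : Prop :=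
  ∃ t : Agenda α, IsAgenda t ∧ IsBalanced t ∧ winner T t = A

/-- `A` wins every balanced agenda under `T`. -/
def FWinsAll {α : Type} [Fintype α] (T : α → α → Prop) (A : α) : Prop :=
  ∀ t : Agenda α, IsAgenda t → IsBalanced t → winner T t = A

/-- Weak possible winner of a profile. -/
def WPp {α : Type} [Fintype α] (P : Profile α) (A : α) : Prop :=
  ∃ Q : Profile α, IsCompletion P Q ∧ WinsSome (maj Q) A

/-- Strong possible winner of a profile. -/
def SPp {α : Type} [Fintype α] (P : Profile α) (A : α) : Prop :=
  ∀ Q : Profile α, IsCompletion P Q → WinsSome (maj Q) A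

/-- Weak Condorcet winner of a profile. -/
def WCp {α : Type} [Fintype α] (P : Profile α) (A : α) : Prop :=
  ∃ Q : Profile α, IsCompletion P Q ∧ WinsAll (maj Q) A

/-- Strong Condorcet winner of a profile. -/
def SCp {α : Type} [Fintype α] (P : Profile α) (A : α) : Prop :=
  ∀ Q : Profile α, IsCompletion P Q → WinsAll (maj Q) A

/-- Weak possible winner of an incomplete majority graph. -/
def WPg {α : Type} [Fintype α] (G : α → α → Prop) (A : α) : Prop :=
  ∃ T : α → α → Prop, IsTournament T ∧ Extends G T ∧ WinsSome T A

/-- Strong possible winner of an incomplete majority graph. -/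
def SPg {α : Type} [Fintype α] (G : α → α → Prop) (A : α) : Prop :=
  ∀ T : α → α → Prop, IsTournament T → Extends G T → WinsSome T A

/-- Weak Condorcet winner of an incomplete majority graph. -/
def WCg {α : Type} [Fintype α] (G : α → α → Prop) (A : α) : Prop :=
  ∃ T : α → α → Prop, IsTournament T ∧ Extends G T ∧ WinsAll T A

/-- Strong Condorcet winner of an incomplete majority graph. -/
def SCg {α : Type} [Fintype α] (G : α → α → Prop) (A : α) : Prop :=
  ∀ T : α → α → Prop, IsTournament T → Extends G T → WinsAll T A

/-- A profile is unweighted if every agent has weight 1. -/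
def IsUnweighted {α : Type} (P : Profile α) : Prop :=
  ∀ p ∈ P.agents, p.1 = 1

/-- `Q` is the unweighted profile corresponding to `P`: each agent of
weight `k` is replaced by `k` agents of weight 1 with the same order. -/
def IsUnwVersion {α : Type} (P Q : Profile α) : Prop :=
  Q.agents = P.agents.flatMap (fun p => List.replicate p.1 (1, p.2))

/-- Fair strong Condorcet winner of a profile (balanced agendas only). -/
def FSCp {α : Type} [Fintype α] (P : Profile α) (A : α) : Prop :=
  ∀ Q : Profile α, IsCompletion P Q → FWinsAll (maj Q) A

/-- Fair weak Condorcet winner of a profile (balanced agendas only). -/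
def FWCp {α : Type} [Fintype α] (P : Profile α) (A : α) : Prop :=
  ∃ Q : Profile α, IsCompletion P Q ∧ FWinsAll (maj Q) A

/-- Fair weak possible winner of a profile (balanced agendas only). -/
def FWPp {α : Type} [Fintype α] (P : Profile α) (A : α) : Prop :=
  ∃ Q : Profile α, IsCompletion P Q ∧ FWinsSome (maj Q) A

/-- The three candidates. -/
inductive Cand : Type
  | A | B | C
deriving DecidableEq

instance : Fintype Cand :=
  ⟨{Cand.A, Cand.B, Cand.C}, by intro x; cases x <;> simp⟩

/-- The strict total order `B > C > A` ("x is preferred to y"). -/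
def ordBCA : Cand → Cand → Prop :=
  fun x y => (match x with | .B => 0 | .C => 1 | .A => 2) <
             (match y with | .B => 0 | .C => 1 | .A => (2:ℕ))

/-- The strict total order `B > A > C`. -/
def ordBAC : Cand → Cand → Prop :=
  fun x y => (match x with | .B => 0 | .A => 1 | .C => 2) <
             (match y with | .B => 0 | .A => 1 | .C => (2:ℕ))

/-- The strict total order `C > B > A`. -/
def ordCBA : Cand → Cand → Prop :=
  fun x y => (match x with | .C => 0 | .B => 1 | .A => 2) <
             (match y with | .C => 0 | .B => 1 | .A => (2:ℕ))

/-- The incomplete preference declaring only `A > B`. -/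
def onlyAB : Cand → Cand → Prop := fun x y => x = Cand.A ∧ y = Cand.B

/-- The profile of the reduction: one agent of weight `1` voting `B>C>A`,
one of weight `2k-1` voting `B>A>C`, one of weight `2k-1` voting `C>B>A`,
and for each `kᵢ` in `ks` one agent of weight `2kᵢ` declaring only `A>B`. -/
def P17 (ks : List ℕ) (k : ℕ) (hk : 0 < k) (hpos : ∀ x ∈ ks, 0 < x)
    (hsum : ks.sum = 2 * k) : Profile Cand where
  agents :=
    (1, ordBCA) :: (2 * k - 1, ordBAC) :: (2 * k - 1, ordCBA) ::
      ks.map (fun ki => (2 * ki, onlyAB))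
  pos := by
    intro p hp
    simp only [List.mem_cons, List.mem_map] at hp
    rcases hp with rfl | rfl | rfl | ⟨ki, hki, rfl⟩
    · norm_num
    · simp only; omega
    · simp only; omega
    · have := hpos ki hki; simp only; omega
  spo := by
    intro p hp
    simp only [List.mem_cons, List.mem_map] at hp
    rcases hp with rfl | rfl | rfl | ⟨ki, hki, rfl⟩
    · exact ⟨fun a b h h' => absurd h' (Nat.lt_asymm h),
        fun a b c h h' => Nat.lt_trans h h'⟩
    · exact ⟨fun a b h h' => absurd h' (Nat.lt_asymm h),
        fun a b c h h' => Nat.lt_trans h h'⟩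
    · exact ⟨fun a b h h' => absurd h' (Nat.lt_asymm h),
        fun a b c h h' => Nat.lt_trans h h'⟩
    · constructor
      · rintro a b ⟨rfl, rfl⟩ ⟨h, -⟩; cases h
      · rintro a b c ⟨rfl, rfl⟩ ⟨h, -⟩; cases h
  oddSum := by
    have hmap : ∀ l : List ℕ,
        ((l.map (fun ki => ((2 * ki : ℕ), onlyAB))).map Prod.fst).sum
          = 2 * l.sum := by
      intro l
      rw [List.map_map]
      induction l with
      | nil => simp
      | cons a t ih => simp_all [Function.comp, Nat.mul_add]
    refine ⟨4 * k - 1, ?_⟩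
    simp only [List.map_cons, List.sum_cons]
    rw [hmap ks, hsum]
    omega

/-! ### Auxiliary material for stmt17 -/

/-- The strict total order `A > B > C`. -/
def ordABC : Cand → Cand → Prop :=
  fun x y => (match x with | .A => 0 | .B => 1 | .C => 2) <
             (match y with | .A => 0 | .B => 1 | .C => (2:ℕ))

/-- The strict total order `C > A > B`. -/
def ordCAB : Cand → Cand → Prop :=
  fun x y => (match x with | .C => 0 | .A => 1 | .B => 2) <
             (match y with | .C => 0 | .A => 1 | .B => (2:ℕ))

instance : DecidableRel ordABC := fun a b => by unfold ordABC; exact Nat.decLt _ _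
instance : DecidableRel ordCAB := fun a b => by unfold ordCAB; exact Nat.decLt _ _
instance : DecidableRel ordBCA := fun a b => by unfold ordBCA; exact Nat.decLt _ _
instance : DecidableRel ordBAC := fun a b => by unfold ordBAC; exact Nat.decLt _ _
instance : DecidableRel ordCBA := fun a b => by unfold ordCBA; exact Nat.decLt _ _

lemma sto_ordABC : IsSTO ordABC := by refine ⟨⟨?_, ?_⟩, ?_⟩ <;> decide
lemma sto_ordCAB : IsSTO ordCAB := by refine ⟨⟨?_, ?_⟩, ?_⟩ <;> decide
lemma sto_ordBCA : IsSTO ordBCA := by refine ⟨⟨?_, ?_⟩, ?_⟩ <;> decide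
lemma sto_ordBAC : IsSTO ordBAC := by refine ⟨⟨?_, ?_⟩, ?_⟩ <;> decide
lemma sto_ordCBA : IsSTO ordCBA := by refine ⟨⟨?_, ?_⟩, ?_⟩ <;> decide

/-- The completion relation on single agents. -/
abbrev AgentCompRel : (ℕ × (Cand → Cand → Prop)) → (ℕ × (Cand → Cand → Prop)) → Prop :=
  fun p q => p.1 = q.1 ∧ IsSTO q.2 ∧ ∀ a b, p.2 a b → q.2 a b

/-- Weight preferring `a` to `b` in a list of agents. -/
noncomputable def g (l : List (ℕ × (Cand → Cand → Prop))) (a b : Cand) : ℕ :=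
  (l.map (fun p => if p.2 a b then p.1 else 0)).sum

lemma g_nil (a b : Cand) : g [] a b = 0 := rfl

lemma g_cons (p : ℕ × (Cand → Cand → Prop)) (l : List (ℕ × (Cand → Cand → Prop)))
    (a b : Cand) : g (p :: l) a b = (if p.2 a b then p.1 else 0) + g l a b := by
  simp [g]

lemma g_cons' (w : ℕ) (r : Cand → Cand → Prop) (l : List (ℕ × (Cand → Cand → Prop)))
    (a b : Cand) : g ((w, r) :: l) a b = (if r a b then w else 0) + g l a b := by
  simp [g]

lemma prefWeight_g (Q : Profile Cand) (a b : Cand) : prefWeight Q a b = g Q.agents a b := rfl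

/-- If `w` is beaten by everything else and beats nothing, then `w` can only win an
agenda all of whose leaves are `w`. -/
lemma loser_leaves {α : Type} (T : α → α → Prop) (w : α)
    (hw : ∀ x, x ≠ w → T x w) (hw2 : ∀ x, ¬ T w x) :
    ∀ t : Agenda α, winner T t = w → ∀ x ∈ t.leaves, x = w
  | .leaf a => by
      intro h x hx
      simp only [winner] at h
      simp only [Agenda.leaves, List.mem_singleton] at hx
      exact hx.trans h
  | .node l r => by
      intro h x hx
      by_cases hc : T (winner T l) (winner T r)
      · rw [winner, if_pos hc] at h
        rw [h] at hc
        exact absurd hc (hw2 _)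
      · rw [winner, if_neg hc] at h
        have hl : winner T l = w := by
          by_contra hne
          have := hw _ hne
          rw [← h] at this
          exact hc this
        simp only [Agenda.leaves, List.mem_append] at hx
        rcases hx with hx | hx
        · exact loser_leaves T w hw hw2 l hl x hx
        · exact loser_leaves T w hw hw2 r h x hx

/-- A Condorcet winner wins every agenda containing it. -/
lemma condorcet_wins {α : Type} (T : α → α → Prop) (w : α)
    (hw : ∀ x, x ≠ w → T w x) (hw2 : ∀ x, ¬ T x w) :
    ∀ t : Agenda α, w ∈ t.leaves → winner T t = w
  | .leaf a => by
      intro h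
      simp only [Agenda.leaves, List.mem_singleton] at h
      simp [winner, h]
  | .node l r => by
      intro h
      simp only [Agenda.leaves, List.mem_append] at h
      rcases h with h | h
      · have hl := condorcet_wins T w hw hw2 l h
        rw [winner, hl]
        by_cases hc : T w (winner T r)
        · rw [if_pos hc]
        · rw [if_neg hc]
          by_contra hne
          exact hc (hw _ hne)
      · have hr := condorcet_wins T w hw hw2 r h
        rw [winner, hr, if_neg (hw2 _)]

/-- Forward key lemma: decomposing the partial agents of a completion. -/
lemma fwdKey (ks : List ℕ) : ∀ (qs : List (ℕ × (Cand → Cand → Prop))),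
    List.Forall₂ AgentCompRel (ks.map fun ki => (2 * ki, onlyAB)) qs →
    ∃ l₁ l₂ : List ℕ, ks.Perm (l₁ ++ l₂) ∧
      g qs Cand.B Cand.C = 2 * l₁.sum ∧ g qs Cand.C Cand.B = 2 * l₂.sum ∧
      g qs Cand.C Cand.A ≤ 2 * l₂.sum ∧
      g qs Cand.C Cand.A + g qs Cand.A Cand.C = 2 * ks.sum ∧
      g qs Cand.A Cand.B = 2 * ks.sum ∧ g qs Cand.B Cand.A = 0 := by
  induction ks with
  | nil =>
      intro qs h
      simp only [List.map_nil] at h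
      cases h
      exact ⟨[], [], by simp, by simp [g_nil], by simp [g_nil], by simp [g_nil],
        by simp [g_nil], by simp [g_nil], by simp [g_nil]⟩
  | cons ki ks ih =>
      intro qs h
      simp only [List.map_cons] at h
      rcases h with _ | ⟨⟨hw, hsto, hext⟩, hrest⟩
      rename_i q qs'
      have hAB : q.2 Cand.A Cand.B := hext _ _ ⟨rfl, rfl⟩
      have asym := hsto.1.1
      have htrans := hsto.1.2
      have tot := hsto.2
      have hnba : ¬ q.2 Cand.B Cand.A := asym _ _ hAB
      obtain ⟨l₁, l₂, hperm, e1, e2, e3, e4, e5, e6⟩ := ih qs' hrest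
      by_cases hbc : q.2 Cand.B Cand.C
      · have hncb : ¬ q.2 Cand.C Cand.B := asym _ _ hbc
        have hnca : ¬ q.2 Cand.C Cand.A := fun hca => hnba (htrans _ _ _ hbc hca)
        have hac : q.2 Cand.A Cand.C := (tot _ _ (by decide)).resolve_right hnca
        refine ⟨ki :: l₁, l₂, by simpa using hperm.cons ki, ?_, ?_, ?_, ?_, ?_, ?_⟩ <;>
          simp only [g_cons, if_pos hbc, if_neg hncb, if_neg hnca, if_pos hac,
            if_pos hAB, if_neg hnba, e1, e2, e3, e4, e5, e6, List.sum_cons, ← hw] <;>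
          omega
      · have hcb : q.2 Cand.C Cand.B := (tot _ _ (by decide)).resolve_left hbc
        have hperm' : (ki :: ks).Perm (l₁ ++ ki :: l₂) :=
          (hperm.cons ki).trans List.perm_middle.symm
        rcases tot Cand.C Cand.A (by decide) with hca | hac
        · have hnac : ¬ q.2 Cand.A Cand.C := asym _ _ hca
          refine ⟨l₁, ki :: l₂, hperm', ?_, ?_, ?_, ?_, ?_, ?_⟩ <;>
            simp only [g_cons, if_neg hbc, if_pos hcb, if_pos hca, if_neg hnac,
              if_pos hAB, if_neg hnba, e1, e2, e3, e4, e5, e6, List.sum_cons, ← hw] <;>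
            omega
        · have hnca : ¬ q.2 Cand.C Cand.A := asym _ _ hac
          refine ⟨l₁, ki :: l₂, hperm', ?_, ?_, ?_, ?_, ?_, ?_⟩ <;>
            simp only [g_cons, if_neg hbc, if_pos hcb, if_neg hnca, if_pos hac,
              if_pos hAB, if_neg hnba, e1, e2, e3, e4, e5, e6, List.sum_cons, ← hw] <;>
            omega

/-- Backward key lemma: constructing the completion of the partial agents. -/
lemma bwdKey (ks : List ℕ) : ∀ (l₁ l₂ : List ℕ), ks.Perm (l₁ ++ l₂) →
    (∀ x ∈ ks, 0 < x) →
    ∃ qs : List (ℕ × (Cand → Cand → Prop)),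
      List.Forall₂ AgentCompRel (ks.map fun ki => (2 * ki, onlyAB)) qs ∧
      g qs Cand.B Cand.C = 2 * l₁.sum ∧ g qs Cand.C Cand.B = 2 * l₂.sum ∧
      g qs Cand.C Cand.A = 2 * l₂.sum ∧ g qs Cand.A Cand.C = 2 * l₁.sum ∧
      (qs.map Prod.fst).sum = 2 * ks.sum ∧ (∀ p ∈ qs, 0 < p.1) ∧ ∀ p ∈ qs, IsSPO p.2 := by
  induction ks with
  | nil =>
      intro l₁ l₂ h _
      have h0 := h.length_eq
      simp only [List.length_nil, List.length_append] at h0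
      have h1 : l₁ = [] := List.length_eq_zero_iff.mp (by omega)
      have h2 : l₂ = [] := List.length_eq_zero_iff.mp (by omega)
      subst h1; subst h2
      exact ⟨[], List.Forall₂.nil, by simp [g_nil], by simp [g_nil], by simp [g_nil],
        by simp [g_nil], by simp, by simp, by simp⟩
  | cons ki ks ih =>
      intro l₁ l₂ h hpos
      have hki : ki ∈ l₁ ++ l₂ := h.subset (List.mem_cons_self)
      have hpos' : ∀ x ∈ ks, 0 < x := fun x hx => hpos x (List.mem_cons_of_mem _ hx)
      have hkipos : 0 < ki := hpos _ (List.mem_cons_self)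
      rcases List.mem_append.mp hki with hmem | hmem
      · obtain ⟨p, s, rfl⟩ := List.append_of_mem hmem
        have h' : ks.Perm ((p ++ s) ++ l₂) := by
          have e : (p ++ ki :: s) ++ l₂ = p ++ ki :: (s ++ l₂) := by simp
          rw [e] at h
          have h2 := h.trans List.perm_middle
          have h3 := (List.perm_cons ki).mp h2
          simpa [List.append_assoc] using h3
        obtain ⟨qs, hf, g1, g2, g3, g4, gw, gp, gs⟩ := ih (p ++ s) l₂ h' hpos'
        refine ⟨(2 * ki, ordABC) :: qs, ?_, ?_, ?_, ?_, ?_, ?_, ?_, ?_⟩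
        · simp only [List.map_cons]
          exact List.Forall₂.cons ⟨rfl, sto_ordABC, by rintro a b ⟨rfl, rfl⟩; show ordABC Cand.A Cand.B; decide⟩ hf
        · rw [g_cons', if_pos (by decide : ordABC Cand.B Cand.C), g1]
          simp only [List.sum_append, List.sum_cons]; omega
        · rw [g_cons', if_neg (by decide : ¬ ordABC Cand.C Cand.B), g2]
          omega
        · rw [g_cons', if_neg (by decide : ¬ ordABC Cand.C Cand.A), g3]
          omega
        · rw [g_cons', if_pos (by decide : ordABC Cand.A Cand.C), g4]
          simp only [List.sum_append, List.sum_cons]; omega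
        · simp only [List.map_cons, List.sum_cons, gw]
          omega
        · intro p hp
          rcases List.mem_cons.mp hp with rfl | hp
          · simpa using hkipos
          · exact gp _ hp
        · intro p hp
          rcases List.mem_cons.mp hp with rfl | hp
          · exact sto_ordABC.1
          · exact gs _ hp
      · obtain ⟨p, s, rfl⟩ := List.append_of_mem hmem
        have h' : ks.Perm (l₁ ++ (p ++ s)) := by
          have e : l₁ ++ (p ++ ki :: s) = (l₁ ++ p) ++ ki :: s := by simp
          rw [e] at h
          have h2 := h.trans List.perm_middle
          have h3 := (List.perm_cons ki).mp h2
          simpa [List.append_assoc] using h3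
        obtain ⟨qs, hf, g1, g2, g3, g4, gw, gp, gs⟩ := ih l₁ (p ++ s) h' hpos'
        refine ⟨(2 * ki, ordCAB) :: qs, ?_, ?_, ?_, ?_, ?_, ?_, ?_, ?_⟩
        · simp only [List.map_cons]
          exact List.Forall₂.cons ⟨rfl, sto_ordCAB, by rintro a b ⟨rfl, rfl⟩; show ordCAB Cand.A Cand.B; decide⟩ hf
        · rw [g_cons', if_neg (by decide : ¬ ordCAB Cand.B Cand.C), g1]
          omega
        · rw [g_cons', if_pos (by decide : ordCAB Cand.C Cand.B), g2]
          simp only [List.sum_append, List.sum_cons]; omega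
        · rw [g_cons', if_pos (by decide : ordCAB Cand.C Cand.A), g3]
          simp only [List.sum_append, List.sum_cons]; omega
        · rw [g_cons', if_neg (by decide : ¬ ordCAB Cand.A Cand.C), g4]
          omega
        · simp only [List.map_cons, List.sum_cons, gw]
          omega
        · intro p hp
          rcases List.mem_cons.mp hp with rfl | hp
          · simpa using hkipos
          · exact gp _ hp
        · intro p hp
          rcases List.mem_cons.mp hp with rfl | hp
          · exact sto_ordCAB.1
          · exact gs _ hp
/-- `B` is a weak possible winner of the reduction profile
iff the multiset `ks` can be partitioned into two parts each summing to `k`. -/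
theorem stmt17 (ks : List ℕ) (k : ℕ) (hk : 0 < k) (hpos : ∀ x ∈ ks, 0 < x)
    (hsum : ks.sum = 2 * k) :
    WPp (P17 ks k hk hpos hsum) Cand.B ↔
      ∃ l₁ l₂ : List ℕ, ks.Perm (l₁ ++ l₂) ∧ l₁.sum = k ∧ l₂.sum = k := by
  constructor
  · rintro ⟨Q, hcomp, t, hagt, hwin⟩
    have hcomp' : List.Forall₂ AgentCompRel
        ((1, ordBCA) :: (2 * k - 1, ordBAC) :: (2 * k - 1, ordCBA) ::
          ks.map (fun ki => (2 * ki, onlyAB))) Q.agents := hcomp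
    obtain ⟨q0, u0, hq0, hcomp0, hu0⟩ := List.forall₂_cons_left_iff.mp hcomp'
    obtain ⟨q1, u1, hq1, hcomp1, hu1⟩ := List.forall₂_cons_left_iff.mp hcomp0
    obtain ⟨q2, qs, hq2, hcompqs, hu2⟩ := List.forall₂_cons_left_iff.mp hcomp1
    have hQ : Q.agents = q0 :: q1 :: q2 :: qs := by rw [hu0, hu1, hu2]
    obtain ⟨hw0, hsto0, hext0⟩ := hq0
    obtain ⟨hw1, hsto1, hext1⟩ := hq1
    obtain ⟨hw2, hsto2, hext2⟩ := hq2
    have h0 : ∀ a b, ordBCA a b → q0.2 a b ∧ ¬ q0.2 b a :=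
      fun a b hab => ⟨hext0 a b hab, hsto0.1.1 a b (hext0 a b hab)⟩
    have h1 : ∀ a b, ordBAC a b → q1.2 a b ∧ ¬ q1.2 b a :=
      fun a b hab => ⟨hext1 a b hab, hsto1.1.1 a b (hext1 a b hab)⟩
    have h2 : ∀ a b, ordCBA a b → q2.2 a b ∧ ¬ q2.2 b a :=
      fun a b hab => ⟨hext2 a b hab, hsto2.1.1 a b (hext2 a b hab)⟩
    have hw0' : q0.1 = 1 := hw0.symm
    have hw1' : q1.1 = 2 * k - 1 := hw1.symm
    have hw2' : q2.1 = 2 * k - 1 := hw2.symm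
    have eBC : prefWeight Q Cand.B Cand.C
        = 1 + ((2 * k - 1) + (0 + g qs Cand.B Cand.C)) := by
      rw [prefWeight_g, hQ, g_cons, g_cons, g_cons,
        if_pos (h0 Cand.B Cand.C (by decide)).1, if_pos (h1 Cand.B Cand.C (by decide)).1,
        if_neg (h2 Cand.C Cand.B (by decide)).2, hw0', hw1']
    have eCB : prefWeight Q Cand.C Cand.B
        = 0 + (0 + ((2 * k - 1) + g qs Cand.C Cand.B)) := by
      rw [prefWeight_g, hQ, g_cons, g_cons, g_cons,
        if_neg (h0 Cand.B Cand.C (by decide)).2, if_neg (h1 Cand.B Cand.C (by decide)).2,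
        if_pos (h2 Cand.C Cand.B (by decide)).1, hw2']
    have eCA : prefWeight Q Cand.C Cand.A
        = 1 + (0 + ((2 * k - 1) + g qs Cand.C Cand.A)) := by
      rw [prefWeight_g, hQ, g_cons, g_cons, g_cons,
        if_pos (h0 Cand.C Cand.A (by decide)).1, if_neg (h1 Cand.A Cand.C (by decide)).2,
        if_pos (h2 Cand.C Cand.A (by decide)).1, hw0', hw2']
    have eAC : prefWeight Q Cand.A Cand.C
        = 0 + ((2 * k - 1) + (0 + g qs Cand.A Cand.C)) := by
      rw [prefWeight_g, hQ, g_cons, g_cons, g_cons,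
        if_neg (h0 Cand.C Cand.A (by decide)).2, if_pos (h1 Cand.A Cand.C (by decide)).1,
        if_neg (h2 Cand.C Cand.A (by decide)).2, hw1']
    have eAB : prefWeight Q Cand.A Cand.B
        = 0 + (0 + (0 + g qs Cand.A Cand.B)) := by
      rw [prefWeight_g, hQ, g_cons, g_cons, g_cons,
        if_neg (h0 Cand.B Cand.A (by decide)).2, if_neg (h1 Cand.B Cand.A (by decide)).2,
        if_neg (h2 Cand.B Cand.A (by decide)).2]
    have eBA : prefWeight Q Cand.B Cand.A
        = 1 + ((2 * k - 1) + ((2 * k - 1) + g qs Cand.B Cand.A)) := by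
      rw [prefWeight_g, hQ, g_cons, g_cons, g_cons,
        if_pos (h0 Cand.B Cand.A (by decide)).1, if_pos (h1 Cand.B Cand.A (by decide)).1,
        if_pos (h2 Cand.B Cand.A (by decide)).1, hw0', hw1', hw2']
    obtain ⟨l₁, l₂, hperm, k1, k2, k3, k4, k5, k6⟩ := fwdKey ks qs hcompqs
    have hsums : l₁.sum + l₂.sum = 2 * k := by
      have := hperm.sum_eq
      rw [List.sum_append] at this
      omega
    have hmajAB : maj Q Cand.A Cand.B := by
      show prefWeight Q Cand.B Cand.A < prefWeight Q Cand.A Cand.B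
      rw [eBA, eAB]; omega
    have hnmajBA : ¬ maj Q Cand.B Cand.A := by
      show ¬ prefWeight Q Cand.A Cand.B < prefWeight Q Cand.B Cand.A
      rw [eBA, eAB]; omega
    by_cases hBC : maj Q Cand.B Cand.C
    · by_cases hCA : maj Q Cand.C Cand.A
      · have hbc : prefWeight Q Cand.C Cand.B < prefWeight Q Cand.B Cand.C := hBC
        have hca : prefWeight Q Cand.A Cand.C < prefWeight Q Cand.C Cand.A := hCA
        rw [eCB, eBC] at hbc
        rw [eAC, eCA] at hca
        exact ⟨l₁, l₂, hperm, by omega, by omega⟩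
      · exfalso
        have hnca : ¬ prefWeight Q Cand.A Cand.C < prefWeight Q Cand.C Cand.A := hCA
        rw [eAC, eCA] at hnca
        have hAC : maj Q Cand.A Cand.C := by
          show prefWeight Q Cand.C Cand.A < prefWeight Q Cand.A Cand.C
          rw [eAC, eCA]; omega
        have hwA : ∀ x, x ≠ Cand.A → maj Q Cand.A x := by
          intro x hx
          cases x
          · exact absurd rfl hx
          · exact hmajAB
          · exact hAC
        have hw2A : ∀ x, ¬ maj Q x Cand.A := by
          intro x
          cases x
          · exact lt_irrefl _
          · exact hnmajBA
          · exact hCA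
        have := condorcet_wins (maj Q) Cand.A hwA hw2A t (hagt.2 _)
        rw [hwin] at this
        exact absurd this (by decide)
    · exfalso
      have hnbc : ¬ prefWeight Q Cand.C Cand.B < prefWeight Q Cand.B Cand.C := hBC
      rw [eCB, eBC] at hnbc
      have hCB : maj Q Cand.C Cand.B := by
        show prefWeight Q Cand.B Cand.C < prefWeight Q Cand.C Cand.B
        rw [eCB, eBC]; omega
      have hwB : ∀ x, x ≠ Cand.B → maj Q x Cand.B := by
        intro x hx
        cases x
        · exact hmajAB
        · exact absurd rfl hx
        · exact hCB
      have hw2B : ∀ x, ¬ maj Q Cand.B x := by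
        intro x
        cases x
        · exact hnmajBA
        · exact lt_irrefl _
        · exact hBC
      have := loser_leaves (maj Q) Cand.B hwB hw2B t hwin Cand.A (hagt.2 _)
      exact absurd this (by decide)
  · rintro ⟨l₁, l₂, hperm, hs1, hs2⟩
    obtain ⟨qs, hf, g1, g2, g3, g4, gw, gp, gs⟩ := bwdKey ks l₁ l₂ hperm hpos
    have hposQ : ∀ p ∈ (1, ordBCA) :: (2 * k - 1, ordBAC) :: (2 * k - 1, ordCBA) :: qs,
        0 < p.1 := by
      intro p hp
      simp only [List.mem_cons] at hp
      rcases hp with rfl | rfl | rfl | hp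
      · norm_num
      · simp only; omega
      · simp only; omega
      · exact gp _ hp
    have hspoQ : ∀ p ∈ (1, ordBCA) :: (2 * k - 1, ordBAC) :: (2 * k - 1, ordCBA) :: qs,
        IsSPO p.2 := by
      intro p hp
      simp only [List.mem_cons] at hp
      rcases hp with rfl | rfl | rfl | hp
      · exact sto_ordBCA.1
      · exact sto_ordBAC.1
      · exact sto_ordCBA.1
      · exact gs _ hp
    have hoddQ : Odd ((((1, ordBCA) :: (2 * k - 1, ordBAC) :: (2 * k - 1, ordCBA) :: qs).map
        Prod.fst).sum) := by
      refine ⟨4 * k - 1, ?_⟩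
      simp only [List.map_cons, List.sum_cons, gw, hsum]
      omega
    let Q : Profile Cand :=
      { agents := (1, ordBCA) :: (2 * k - 1, ordBAC) :: (2 * k - 1, ordCBA) :: qs
        pos := hposQ, spo := hspoQ, oddSum := hoddQ }
    have hQag : Q.agents = (1, ordBCA) :: (2 * k - 1, ordBAC) :: (2 * k - 1, ordCBA) :: qs :=
      rfl
    refine ⟨Q, ?_, ?_⟩
    · show List.Forall₂ _ _ _
      exact List.Forall₂.cons ⟨rfl, sto_ordBCA, fun a b h => h⟩
        (List.Forall₂.cons ⟨rfl, sto_ordBAC, fun a b h => h⟩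
          (List.Forall₂.cons ⟨rfl, sto_ordCBA, fun a b h => h⟩ hf))
    · have eBC : prefWeight Q Cand.B Cand.C
          = 1 + ((2 * k - 1) + (0 + g qs Cand.B Cand.C)) := by
        rw [prefWeight_g, hQag, g_cons', g_cons', g_cons',
          if_pos (by decide : ordBCA Cand.B Cand.C), if_pos (by decide : ordBAC Cand.B Cand.C),
          if_neg (by decide : ¬ ordCBA Cand.B Cand.C)]
      have eCB : prefWeight Q Cand.C Cand.B
          = 0 + (0 + ((2 * k - 1) + g qs Cand.C Cand.B)) := by
        rw [prefWeight_g, hQag, g_cons', g_cons', g_cons',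
          if_neg (by decide : ¬ ordBCA Cand.C Cand.B), if_neg (by decide : ¬ ordBAC Cand.C Cand.B),
          if_pos (by decide : ordCBA Cand.C Cand.B)]
      have eCA : prefWeight Q Cand.C Cand.A
          = 1 + (0 + ((2 * k - 1) + g qs Cand.C Cand.A)) := by
        rw [prefWeight_g, hQag, g_cons', g_cons', g_cons',
          if_pos (by decide : ordBCA Cand.C Cand.A), if_neg (by decide : ¬ ordBAC Cand.C Cand.A),
          if_pos (by decide : ordCBA Cand.C Cand.A)]
      have eAC : prefWeight Q Cand.A Cand.C
          = 0 + ((2 * k - 1) + (0 + g qs Cand.A Cand.C)) := by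
        rw [prefWeight_g, hQag, g_cons', g_cons', g_cons',
          if_neg (by decide : ¬ ordBCA Cand.A Cand.C), if_pos (by decide : ordBAC Cand.A Cand.C),
          if_neg (by decide : ¬ ordCBA Cand.A Cand.C)]
      have hBC : maj Q Cand.B Cand.C := by
        show prefWeight Q Cand.C Cand.B < prefWeight Q Cand.B Cand.C
        rw [eCB, eBC, g1, g2, hs1, hs2]; omega
      have hnCB : ¬ maj Q Cand.C Cand.B := by
        show ¬ prefWeight Q Cand.B Cand.C < prefWeight Q Cand.C Cand.B
        rw [eCB, eBC, g1, g2, hs1, hs2]; omega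
      have hCA : maj Q Cand.C Cand.A := by
        show prefWeight Q Cand.A Cand.C < prefWeight Q Cand.C Cand.A
        rw [eAC, eCA, g3, g4, hs1, hs2]; omega
      have hnAC : ¬ maj Q Cand.A Cand.C := by
        show ¬ prefWeight Q Cand.C Cand.A < prefWeight Q Cand.A Cand.C
        rw [eAC, eCA, g3, g4, hs1, hs2]; omega
      refine ⟨.node (.node (.leaf .A) (.leaf .C)) (.leaf .B), ⟨by decide, by decide⟩, ?_⟩
      rw [winner, winner, winner, winner, winner, if_neg hnAC, if_neg hnCB]
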